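/- For any integer n ≥ 0, any coalitions E₁,…,Eₙ and any pairwise disjoint coalitions F₁,…,Fₙ, and any formulas χ₁,…,χₙ of Φ: {K̄_{E_i} B_{E_i}^{F_i} χ_i}_{i=1}^n, χ₁∨…∨χₙ ⊢ B_{E₁∪…∪Eₙ}^{F₁∪…∪Fₙ}(χ₁∨…∨χₙ). -/
import Mathlib


namespace DutyToWarn

/-- The language Φ: propositional variables, negation, implication,
distributed knowledge `K_C φ`, and second-order blameworthiness `B_C^D φ`. -/
inductive Formula (Agent V : Type) : Type
  | var : V → Formula Agent V
  | neg : Formula Agent V → Formula Agent V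
  | imp : Formula Agent V → Formula Agent V → Formula Agent V
  | know : Set Agent → Formula Agent V → Formula Agent V
  | blame : Set Agent → Set Agent → Formula Agent V → Formula Agent V

variable {Agent V B : Type}

namespace Formula

/-- φ ∨ ψ is defined through ¬ and → in the usual way: ¬φ → ψ. -/
def disj (φ ψ : Formula Agent V) : Formula Agent V := imp (neg φ) ψ

/-- φ ∧ ψ is defined through ¬ and → in the usual way: ¬(φ → ¬ψ). -/
def conj (φ ψ : Formula Agent V) : Formula Agent V := neg (imp φ (neg ψ))

/-- φ ↔ ψ is defined as (φ → ψ) ∧ (ψ → φ). -/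
def biimp (φ ψ : Formula Agent V) : Formula Agent V := conj (imp φ ψ) (imp ψ φ)

/-- K̄_C φ abbreviates ¬ K_C ¬ φ. -/
def dknow (C : Set Agent) (φ : Formula Agent V) : Formula Agent V := neg (know C (neg φ))

end Formula

/-- The Boolean constant ⊥, defined through ¬ and →. -/
def falsum [Inhabited V] : Formula Agent V :=
  Formula.neg (Formula.imp (Formula.var default) (Formula.var default))

/-- The disjunction χ₁ ∨ … ∨ χₙ of a list of formulas; for n = 0 it is ⊥. -/
def bigOr [Inhabited V] : List (Formula Agent V) → Formula Agent V
  | [] => falsum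
  | [φ] => φ
  | φ :: ψ :: l => φ.disj (bigOr (ψ :: l))

/-- A propositional valuation: any assignment of truth values to formulas
that respects negation and implication (treating K- and B-formulas as atoms). -/
def IsPropValuation (v : Formula Agent V → Prop) : Prop :=
  (∀ φ : Formula Agent V, v φ.neg ↔ ¬ v φ) ∧
    ∀ φ ψ : Formula Agent V, v (φ.imp ψ) ↔ (v φ → v ψ)

/-- A propositional tautology in the language Φ. -/
def Tautology (φ : Formula Agent V) : Prop :=
  ∀ v : Formula Agent V → Prop, IsPropValuation v → v φ

/-- ⊢ φ : provability from the axioms using Modus Ponens and Necessitation. -/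
inductive Provable : Formula Agent V → Prop
  | taut {φ : Formula Agent V} : Tautology φ → Provable φ
  | truthK {C : Set Agent} {φ : Formula Agent V} :
      Provable ((Formula.know C φ).imp φ)
  | truthB {C D : Set Agent} {φ : Formula Agent V} :
      Provable ((Formula.blame C D φ).imp φ)
  | distr {C : Set Agent} {φ ψ : Formula Agent V} :
      Provable ((Formula.know C (φ.imp ψ)).imp ((Formula.know C φ).imp (Formula.know C ψ)))
  | negIntro {C : Set Agent} {φ : Formula Agent V} :
      Provable ((Formula.know C φ).neg.imp (Formula.know C (Formula.know C φ).neg))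
  | monoK {C E : Set Agent} {φ : Formula Agent V} (h : C ⊆ E) :
      Provable ((Formula.know C φ).imp (Formula.know E φ))
  | monoB {C D E F : Set Agent} {φ : Formula Agent V} (h1 : C ⊆ E) (h2 : D ⊆ F) :
      Provable ((Formula.blame C D φ).imp (Formula.blame E F φ))
  | noneToAct {C : Set Agent} {φ : Formula Agent V} :
      Provable (Formula.neg (Formula.blame C ∅ φ))
  | jointResp {C D E F : Set Agent} {φ ψ : Formula Agent V} (h : D ∩ F = ∅) :
      Provable (((Formula.dknow C (Formula.blame C D φ)).conj
        (Formula.dknow E (Formula.blame E F ψ))).imp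
        ((φ.disj ψ).imp (Formula.blame (C ∪ E) (D ∪ F) (φ.disj ψ))))
  | strictCond {C D : Set Agent} {φ ψ : Formula Agent V} :
      Provable ((Formula.know C (φ.imp ψ)).imp
        ((Formula.blame C D ψ).imp (φ.imp (Formula.blame C D φ))))
  | introB {C D : Set Agent} {φ : Formula Agent V} :
      Provable ((Formula.blame C D φ).imp (Formula.know C (φ.imp (Formula.blame C D φ))))
  | mp {φ ψ : Formula Agent V} : Provable (φ.imp ψ) → Provable φ → Provable ψ
  | nec {C : Set Agent} {φ : Formula Agent V} : Provable φ → Provable (Formula.know C φ)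

/-- X ⊢ φ : provability from the theorems of the system together with the
additional hypotheses X, using only Modus Ponens. -/
inductive ProvableFrom (X : Set (Formula Agent V)) : Formula Agent V → Prop
  | hyp {φ : Formula Agent V} (h : φ ∈ X) : ProvableFrom X φ
  | thm {φ : Formula Agent V} (h : Provable φ) : ProvableFrom X φ
  | mp {φ ψ : Formula Agent V} (h1 : ProvableFrom X (φ.imp ψ)) (h2 : ProvableFrom X φ) :
      ProvableFrom X ψ

/-- A game (Definition 1). -/
structure Game (Agent V : Type) where
  I : Type
  Δ : Type
  Ω : Type
  sim : Agent → I → I → Prop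
  sim_equiv : ∀ a : Agent, Equivalence (sim a)
  P : Set (I × (Agent → Δ) × Ω)
  play_exists : ∀ (α : I) (δ : Agent → Δ), ∃ ω : Ω, (α, δ, ω) ∈ P
  π : V → Set (I × (Agent → Δ) × Ω)
  π_sub : ∀ p : V, π p ⊆ P

/-- α ∼_C α' : indistinguishability by a coalition. -/
def Game.simC (G : Game Agent V) (C : Set Agent) (α α' : G.I) : Prop :=
  ∀ a ∈ C, G.sim a α α'

/-- Satisfiability (α,δ,ω) ⊩ φ (Definition 2). -/
def Game.Sat (G : Game Agent V) :
    Formula Agent V → (G.I × (Agent → G.Δ) × G.Ω) → Prop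
  | Formula.var p, x => x ∈ G.π p
  | Formula.neg φ, x => ¬ G.Sat φ x
  | Formula.imp φ ψ, x => G.Sat φ x → G.Sat ψ x
  | Formula.know C φ, x => ∀ x' ∈ G.P, G.simC C x.1 x'.1 → G.Sat φ x'
  | Formula.blame C D φ, x => G.Sat φ x ∧
      ∃ s : Agent → G.Δ, ∀ x' ∈ G.P, G.simC C x.1 x'.1 →
        (∀ a ∈ D, s a = x'.2.1 a) → ¬ G.Sat φ x'

/-- A set of formulas is consistent if no contradiction is derivable from it. -/
def Consistent (X : Set (Formula Agent V)) : Prop :=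
  ¬ ∃ φ : Formula Agent V, ProvableFrom X φ ∧ ProvableFrom X φ.neg

/-- A maximal consistent set: consistent with no proper consistent extension. -/
def MaxConsistent (X : Set (Formula Agent V)) : Prop :=
  Consistent X ∧ ∀ Y : Set (Formula Agent V), X ⊆ Y → Consistent Y → Y = X

/-- One step (Cᵢ,bᵢ),Xᵢ of a sequence in the set of outcomes of the canonical game. -/
abbrev Step (Agent V B : Type) : Type := Set Agent × B × Set (Formula Agent V)

/-- Validity of a sequence X₀,(C₁,b₁),X₁,…,(Cₙ,bₙ),Xₙ : each Xᵢ is maximal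
consistent and {φ | K_{Cᵢ} φ ∈ X_{i-1}} ⊆ Xᵢ. -/
def ValidSeq (X₀ : Set (Formula Agent V)) : List (Step Agent V B) → Prop
  | [] => True
  | (C, _, X) :: l =>
      MaxConsistent X ∧ (∀ φ : Formula Agent V, Formula.know C φ ∈ X₀ → φ ∈ X) ∧
        ValidSeq X l

/-- The set Ω of outcomes of the canonical game G(X₀): valid sequences starting at X₀
(the sequence of steps after X₀ is recorded). -/
def COutcome (X₀ : Set (Formula Agent V)) (B : Type) : Type :=
  {l : List (Step Agent V B) // ValidSeq X₀ l}

/-- The last maximal consistent set of a sequence. -/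
def hdSeq (X₀ : Set (Formula Agent V)) : List (Step Agent V B) → Set (Formula Agent V)
  | [] => X₀
  | (_, _, X) :: l => hdSeq X l

/-- hd(ω) : the last maximal consistent set of the outcome ω. -/
def chd {X₀ : Set (Formula Agent V)} (ω : COutcome X₀ B) : Set (Formula Agent V) :=
  hdSeq X₀ ω.1

/-- ω ∼_a ω' in the Tree of Knowledge: all edges along the unique path between
ω and ω' are labeled with agent a, i.e. there is a common ancestor w such that
every edge from w down to ω and from w down to ω' is labeled with a. -/
def csimA {X₀ : Set (Formula Agent V)} (a : Agent) (u v : COutcome X₀ B) : Prop :=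
  ∃ w t t' : List (Step Agent V B),
    u.1 = w ++ t ∧ v.1 = w ++ t' ∧ (∀ s ∈ t, a ∈ s.1) ∧ (∀ s ∈ t', a ∈ s.1)

/-- ω ∼_C ω' iff ω ∼_a ω' for each a ∈ C. -/
def csimC {X₀ : Set (Formula Agent V)} (C : Set Agent) (u v : COutcome X₀ B) : Prop :=
  ∀ a ∈ C, csimA a u v

/-- The relation ∼_𝒜 on outcomes. -/
def crel (X₀ : Set (Formula Agent V)) (B : Type) : COutcome X₀ B → COutcome X₀ B → Prop :=
  csimC (Set.univ : Set Agent)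

/-- The set I of initial states of the canonical game: I = Ω/∼_𝒜. -/
def CI (X₀ : Set (Formula Agent V)) (B : Type) : Type :=
  Quot (crel X₀ B)

/-- The equivalence class of an outcome. -/
def ctoI {X₀ : Set (Formula Agent V)} (u : COutcome X₀ B) : CI X₀ B :=
  Quot.mk (crel X₀ B) u

/-- The relation α ∼_C α' on I, induced on representatives. -/
def IsimC {X₀ : Set (Formula Agent V)} (C : Set Agent) (α α' : CI X₀ B) : Prop :=
  ∃ u v : COutcome X₀ B, ctoI u = α ∧ ctoI v = α' ∧ csimC C u v

/-- The domain of actions of the canonical game: Δ = {(φ,C,ω)}. -/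
abbrev CAct (X₀ : Set (Formula Agent V)) (B : Type) : Type :=
  Formula Agent V × Set Agent × COutcome X₀ B

/-- Triples (α, δ, ω) over the canonical game. -/
abbrev CPlay (X₀ : Set (Formula Agent V)) (B : Type) : Type :=
  CI X₀ B × (Agent → CAct X₀ B) × COutcome X₀ B

/-- The set P of plays of the canonical game (Definition 13). -/
def CP (X₀ : Set (Formula Agent V)) (B : Type) : Set (CPlay X₀ B) :=
  {x | ctoI x.2.2 = x.1 ∧
    ∀ (v : COutcome X₀ B) (C D : Set Agent) (ψ : Formula Agent V),
      Formula.dknow C (Formula.blame C D ψ) ∈ chd v →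
      (∀ a ∈ D, x.2.1 a = (ψ, C, v)) →
      csimC C x.2.2 v →
      Formula.neg ψ ∈ chd x.2.2}

/-- π(p) in the canonical game. -/
def Cπ (X₀ : Set (Formula Agent V)) (B : Type) (p : V) : Set (CPlay X₀ B) :=
  {x | x ∈ CP X₀ B ∧ Formula.var p ∈ chd x.2.2}

/-- Satisfiability in the canonical game G(X₀) (Definition 2 instantiated). -/
def CSat (X₀ : Set (Formula Agent V)) (B : Type) :
    Formula Agent V → CPlay X₀ B → Prop
  | Formula.var p, x => x ∈ Cπ X₀ B p
  | Formula.neg φ, x => ¬ CSat X₀ B φ x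
  | Formula.imp φ ψ, x => CSat X₀ B φ x → CSat X₀ B ψ x
  | Formula.know C φ, x => ∀ x' ∈ CP X₀ B, IsimC C x.1 x'.1 → CSat X₀ B φ x'
  | Formula.blame C D φ, x => CSat X₀ B φ x ∧
      ∃ s : Agent → CAct X₀ B, ∀ x' ∈ CP X₀ B, IsimC C x.1 x'.1 →
        (∀ a ∈ D, s a = x'.2.1 a) → ¬ CSat X₀ B φ x'

section Infra
variable {Agent V : Type}

open Formula

/-- Build a `Provable` from a semantic tautology check. -/
lemma ptaut {φ : Formula Agent V}
    (h : ∀ v : Formula Agent V → Prop,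
      (∀ ψ : Formula Agent V, v ψ.neg ↔ ¬ v ψ) →
      (∀ ψ χ : Formula Agent V, v (ψ.imp χ) ↔ (v ψ → v χ)) → v φ) :
    Provable φ :=
  Provable.taut fun v hv => h v hv.1 hv.2

lemma imp_trans {a b c : Formula Agent V} (h1 : Provable (a.imp b))
    (h2 : Provable (b.imp c)) : Provable (a.imp c) := by
  have t : Provable ((a.imp b).imp ((b.imp c).imp (a.imp c))) :=
    ptaut (by intro v hn hi; simp only [hi]; tauto)
  exact (t.mp h1).mp h2

lemma contrapos {a b : Formula Agent V} (h : Provable (a.imp b)) :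
    Provable (b.neg.imp a.neg) := by
  have t : Provable ((a.imp b).imp (b.neg.imp a.neg)) :=
    ptaut (by intro v hn hi; simp only [hi, hn]; tauto)
  exact t.mp h

/-- Weakening. -/
lemma PF.weaken {X Y : Set (Formula Agent V)} {φ : Formula Agent V}
    (hXY : X ⊆ Y) (h : ProvableFrom X φ) : ProvableFrom Y φ := by
  induction h with
  | hyp h => exact .hyp (hXY h)
  | thm h => exact .thm h
  | mp _ _ ih1 ih2 => exact ih1.mp ih2

/-- Deduction theorem. -/
lemma deduction {X : Set (Formula Agent V)} {φ ψ : Formula Agent V}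
    (h : ProvableFrom (insert φ X) ψ) : ProvableFrom X (φ.imp ψ) := by
  induction h with
  | @hyp χ h =>
    rcases h with h | h
    · subst h; exact .thm (ptaut (by intro v hn hi; simp only [hi]; tauto))
    · exact ProvableFrom.mp
        (.thm (ptaut (by intro v hn hi; simp only [hi]; tauto) :
          Provable (χ.imp (φ.imp χ)))) (.hyp h)
  | @thm χ h =>
    exact ProvableFrom.mp
      (.thm (ptaut (by intro v hn hi; simp only [hi]; tauto) :
        Provable (χ.imp (φ.imp χ)))) (.thm h)
  | @mp a b _ _ ih1 ih2 =>
    have t : Provable ((φ.imp (a.imp b)).imp ((φ.imp a).imp (φ.imp b))) :=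
      ptaut (by intro v hn hi; simp only [hi]; tauto)
    exact ((ProvableFrom.thm t).mp ih1).mp ih2

/-- Modus ponens under K. -/
lemma kmp {X : Set (Formula Agent V)} {C : Set Agent} {a b : Formula Agent V}
    (h1 : ProvableFrom X (know C (a.imp b))) (h2 : ProvableFrom X (know C a)) :
    ProvableFrom X (know C b) :=
  ((ProvableFrom.thm Provable.distr).mp h1).mp h2

/-- Chain of implications f 0 → f 1 → ... → g. -/
def impChain : ∀ {n : ℕ}, (Fin n → Formula Agent V) → Formula Agent V → Formula Agent V
  | 0, _, g => g
  | _ + 1, f, g => impChain (fun i => f i.succ) ((f 0).imp g)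

lemma range_fin_succ {n : ℕ} (f : Fin (n + 1) → Formula Agent V) :
    Set.range f = insert (f 0) (Set.range fun i : Fin n => f i.succ) := by
  ext x
  constructor
  · rintro ⟨i, rfl⟩
    rcases Fin.eq_zero_or_eq_succ i with rfl | ⟨j, rfl⟩
    · exact Or.inl rfl
    · exact Or.inr ⟨j, rfl⟩
  · rintro (rfl | ⟨j, rfl⟩)
    · exact ⟨0, rfl⟩
    · exact ⟨j.succ, rfl⟩

lemma pf_empty {φ : Formula Agent V} (h : ProvableFrom (∅ : Set (Formula Agent V)) φ) :
    Provable φ := by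
  induction h with
  | hyp h => exact absurd h (Set.notMem_empty _)
  | thm h => exact h
  | mp _ _ ih1 ih2 => exact ih1.mp ih2

/-- Peel off finitely many hypotheses. -/
lemma peel_fin : ∀ {n : ℕ} (f : Fin n → Formula Agent V) {g : Formula Agent V},
    ProvableFrom (Set.range f) g → Provable (impChain f g) := by
  intro n
  induction n with
  | zero =>
    intro f g h
    have : Set.range f = (∅ : Set (Formula Agent V)) := by
      simp [Set.range_eq_empty]
    rw [this] at h
    exact pf_empty h
  | succ n ih =>
    intro f g h
    rw [range_fin_succ] at h
    exact ih (fun i => f i.succ) (deduction h)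

/-- Feed known hypotheses into a known implication chain. -/
lemma feedK : ∀ {n : ℕ} {f : Fin n → Formula Agent V} {g : Formula Agent V}
    {C : Set Agent} {X : Set (Formula Agent V)},
    ProvableFrom X (know C (impChain f g)) →
    (∀ i, ProvableFrom X (know C (f i))) → ProvableFrom X (know C g) := by
  intro n
  induction n with
  | zero => intro f g C X h _; exact h
  | succ n ih =>
    intro f g C X h hall
    have := ih (f := fun i => f i.succ) (g := (f 0).imp g) h (fun i => hall i.succ)
    exact kmp this (hall 0)

/-- Key single lemma: ⊢ K̄_C B_C^D φ → (φ → B_C^D φ). -/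
lemma dknow_blame_imp {C D : Set Agent} {φ : Formula Agent V} :
    Provable ((dknow C (blame C D φ)).imp (φ.imp (blame C D φ))) := by
  set b : Formula Agent V := blame C D φ with hb
  have h1 : Provable (b.imp (know C (φ.imp b))) := Provable.introB
  have h2 : Provable ((know C (φ.imp b)).neg.imp b.neg) := contrapos h1
  have h3 : Provable (know C ((know C (φ.imp b)).neg.imp b.neg)) := h2.nec (C := C)
  have h4 : Provable ((know C (know C (φ.imp b)).neg).imp (know C b.neg)) :=
    Provable.distr.mp h3
  have h5 : Provable ((know C (φ.imp b)).neg.imp (know C b.neg)) :=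
    imp_trans Provable.negIntro h4
  have h6 : Provable ((know C b.neg).neg.imp (know C (φ.imp b)).neg.neg) := contrapos h5
  have h7 : Provable ((know C (φ.imp b)).neg.neg.imp (know C (φ.imp b))) :=
    ptaut (by intro v hn hi; simp only [hn, hi]; tauto)
  have h8 : Provable ((know C b.neg).neg.imp (φ.imp b)) :=
    imp_trans (imp_trans h6 h7) Provable.truthK
  exact h8

end Infra
section Main
variable {Agent V : Type}
open Formula

lemma superJR [Inhabited V] : ∀ (n : ℕ) (E F : Fin n → Set Agent)
    (χ : Fin n → Formula Agent V),
    (∀ i j : Fin n, i ≠ j → F i ∩ F j = ∅) →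
    ProvableFrom
      (Set.range (fun i : Fin n =>
          Formula.dknow (E i) (Formula.blame (E i) (F i) (χ i))) ∪
        {bigOr (List.ofFn χ)})
      (Formula.blame (⋃ i, E i) (⋃ i, F i) (bigOr (List.ofFn χ)))
  | 0, E, F, χ, hF => by
    have hb : bigOr (List.ofFn χ) = (falsum : Formula Agent V) := rfl
    refine ProvableFrom.mp (ProvableFrom.thm (ptaut ?_))
      (ProvableFrom.hyp (Or.inr rfl : bigOr (List.ofFn χ) ∈ _ ∪ {bigOr (List.ofFn χ)}))
    intro v hn hi
    rw [hb]
    simp only [falsum, hn, hi]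
    tauto
  | 1, E, F, χ, hF => by
    have hb : bigOr (List.ofFn χ) = χ 0 := by
      simp [List.ofFn_succ, bigOr]
    set X : Set (Formula Agent V) := Set.range (fun i : Fin 1 =>
        Formula.dknow (E i) (Formula.blame (E i) (F i) (χ i))) ∪
      {bigOr (List.ofFn χ)} with hXdef
    rw [hb]
    have h0 : ProvableFrom X (dknow (E 0) (blame (E 0) (F 0) (χ 0))) :=
      ProvableFrom.hyp (Or.inl ⟨0, rfl⟩)
    have hχ : ProvableFrom X (χ 0) := ProvableFrom.hyp (Or.inr (by rw [hb]; rfl))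
    have hB := ((ProvableFrom.thm dknow_blame_imp).mp h0).mp hχ
    exact (ProvableFrom.thm
      (Provable.monoB (Set.subset_iUnion E 0) (Set.subset_iUnion F 0))).mp hB
  | (n + 2), E, F, χ, hF => by
    set f : Fin (n + 2) → Formula Agent V :=
      fun i => dknow (E i) (blame (E i) (F i) (χ i)) with hf
    set big : Formula Agent V := bigOr (List.ofFn χ) with hbigdef
    set tb : Formula Agent V := bigOr (List.ofFn (fun i : Fin (n + 1) => χ i.succ))
      with htb
    set U' : Set Agent := ⋃ i : Fin (n + 1), E i.succ with hU'
    set V' : Set Agent := ⋃ i : Fin (n + 1), F i.succ with hV'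
    set U : Set Agent := ⋃ i, E i with hU
    set Vv : Set Agent := ⋃ i, F i with hVv
    set B' : Formula Agent V := blame U' V' tb with hB'
    have hbig : big = (χ 0).disj tb := by
      rw [hbigdef, htb, List.ofFn_succ (f := χ), List.ofFn_succ]
      rfl
    have hsubU' : U' ⊆ U := Set.iUnion_subset fun i => Set.subset_iUnion E i.succ
    have hsubV' : V' ⊆ Vv := Set.iUnion_subset fun i => Set.subset_iUnion F i.succ
    have hE0 : E 0 ⊆ U := Set.subset_iUnion E 0
    have hF0 : F 0 ⊆ Vv := Set.subset_iUnion F 0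
    have hdisj : F 0 ∩ V' = ∅ := by
      rw [Set.eq_empty_iff_forall_notMem]
      rintro a ⟨ha0, hai⟩
      obtain ⟨i, hai⟩ := Set.mem_iUnion.mp hai
      have h := hF 0 i.succ (Fin.succ_ne_zero i).symm
      rw [Set.eq_empty_iff_forall_notMem] at h
      exact h a ⟨ha0, hai⟩
    have hF' : ∀ i j : Fin (n + 1), i ≠ j → F i.succ ∩ F j.succ = ∅ :=
      fun i j h => hF _ _ fun hc => h (Fin.succ_injective _ hc)
    have ihp := superJR (n + 1) (fun i => E i.succ) (fun i => F i.succ)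
      (fun i => χ i.succ) hF'
    rw [Set.union_singleton] at ihp
    have hded :
        ProvableFrom (Set.range fun i : Fin (n + 1) =>
          dknow (E i.succ) (blame (E i.succ) (F i.succ) (χ i.succ)))
          (tb.imp B') := deduction ihp
    have hchain := peel_fin _ hded
    -- the outer hypothesis set
    set X : Set (Formula Agent V) := Set.range f ∪ {big} with hX
    have hk : ProvableFrom X (know U' (tb.imp B')) := by
      refine feedK (ProvableFrom.thm (hchain.nec (C := U'))) fun i => ?_
      have hhyp : ProvableFrom X
          (dknow (E i.succ) (blame (E i.succ) (F i.succ) (χ i.succ))) :=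
        ProvableFrom.hyp (Or.inl ⟨i.succ, rfl⟩)
      have h1 := (ProvableFrom.thm (Provable.negIntro
        (C := E i.succ) (φ := (blame (E i.succ) (F i.succ) (χ i.succ)).neg))).mp hhyp
      exact (ProvableFrom.thm (Provable.monoK
        (Set.subset_iUnion (fun i : Fin (n + 1) => E i.succ) i))).mp h1
    set θ : Formula Agent V := know U' B'.neg with hθ
    have hbigX : ProvableFrom X big := ProvableFrom.hyp (Or.inr rfl)
    -- Case A : θ.neg, i.e. K̄_{U'} B'
    have caseA : ProvableFrom X (θ.neg.imp (blame U Vv big)) := by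
      refine deduction ?_
      have hKbar : ProvableFrom (insert θ.neg X) θ.neg := ProvableFrom.hyp (Or.inl rfl)
      have h0 : ProvableFrom (insert θ.neg X) (f 0) :=
        ProvableFrom.hyp (Or.inr (Or.inl ⟨0, rfl⟩))
      have tconj : Provable ((f 0).imp (θ.neg.imp ((f 0).conj θ.neg))) :=
        ptaut (by intro v hn hi; simp only [Formula.conj, hn, hi]; tauto)
      have hconj := ((ProvableFrom.thm tconj).mp h0).mp hKbar
      have jr : Provable (((f 0).conj θ.neg).imp
          (((χ 0).disj tb).imp (blame (E 0 ∪ U') (F 0 ∪ V') ((χ 0).disj tb)))) :=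
        Provable.jointResp hdisj
      have hbX : ProvableFrom (insert θ.neg X) ((χ 0).disj tb) := by
        rw [← hbig]; exact PF.weaken (Set.subset_insert _ _) hbigX
      have hBun := ((ProvableFrom.thm jr).mp hconj).mp hbX
      rw [← hbig] at hBun
      exact (ProvableFrom.thm (Provable.monoB (Set.union_subset hE0 hsubU')
        (Set.union_subset hF0 hsubV'))).mp hBun
    -- Case B : θ, i.e. K_{U'} ¬B'
    have caseB : ProvableFrom X (θ.imp (blame U Vv big)) := by
      refine deduction ?_
      set X' : Set (Formula Agent V) := insert θ X with hX'
      have hθh : ProvableFrom X' θ := ProvableFrom.hyp (Or.inl rfl)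
      have hk' : ProvableFrom X' (know U' (tb.imp B')) :=
        PF.weaken (Set.subset_insert _ _) hk
      have tcp : Provable ((tb.imp B').imp (B'.neg.imp tb.neg)) :=
        ptaut (by intro v hn hi; simp only [hn, hi]; tauto)
      have hKtbneg : ProvableFrom X' (know U' tb.neg) :=
        kmp (kmp (ProvableFrom.thm (tcp.nec (C := U'))) hk') hθh
      have t8 : Provable ((tb.neg).imp (((χ 0).disj tb).imp (χ 0))) :=
        ptaut (by intro v hn hi; simp only [Formula.disj, hn, hi]; tauto)
      have hKimp : ProvableFrom X' (know U' (((χ 0).disj tb).imp (χ 0))) :=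
        kmp (ProvableFrom.thm (t8.nec (C := U'))) hKtbneg
      have hKimpU : ProvableFrom X' (know U (((χ 0).disj tb).imp (χ 0))) :=
        (ProvableFrom.thm (Provable.monoK hsubU')).mp hKimp
      have hbX : ProvableFrom X' ((χ 0).disj tb) := by
        rw [← hbig]; exact PF.weaken (Set.subset_insert _ _) hbigX
      have htbneg : ProvableFrom X' tb.neg :=
        (ProvableFrom.thm Provable.truthK).mp hKtbneg
      have hχ0 : ProvableFrom X' (χ 0) :=
        ((ProvableFrom.thm t8).mp htbneg).mp hbX
      have h0 : ProvableFrom X' (f 0) := ProvableFrom.hyp (Or.inr (Or.inl ⟨0, rfl⟩))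
      have hB0 : ProvableFrom X' (blame (E 0) (F 0) (χ 0)) :=
        ((ProvableFrom.thm dknow_blame_imp).mp h0).mp hχ0
      have hB0U : ProvableFrom X' (blame U Vv (χ 0)) :=
        (ProvableFrom.thm (Provable.monoB hE0 hF0)).mp hB0
      have hfin := (((ProvableFrom.thm (Provable.strictCond (C := U) (D := Vv)
        (φ := (χ 0).disj tb) (ψ := χ 0))).mp hKimpU).mp hB0U).mp hbX
      rw [← hbig] at hfin
      exact hfin
    have t5 : Provable ((θ.imp (blame U Vv big)).imp
        ((θ.neg.imp (blame U Vv big)).imp (blame U Vv big))) :=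
      ptaut (by intro v hn hi; simp only [hn, hi]; tauto)
    exact ((ProvableFrom.thm t5).mp caseB).mp caseA

end Main
/-- Lemma 6: {K̄_{Eᵢ} B_{Eᵢ}^{Fᵢ} χᵢ}ᵢ, χ₁∨…∨χₙ ⊢
    B_{E₁∪…∪Eₙ}^{F₁∪…∪Fₙ}(χ₁∨…∨χₙ), for pairwise disjoint F₁,…,Fₙ. -/
theorem super_joint_responsibility {Agent V : Type} [Inhabited V] (n : ℕ)
    (E F : Fin n → Set Agent) (χ : Fin n → Formula Agent V)
    (hF : ∀ i j : Fin n, i ≠ j → F i ∩ F j = ∅) :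
    ProvableFrom
      (Set.range (fun i : Fin n =>
          Formula.dknow (E i) (Formula.blame (E i) (F i) (χ i))) ∪
        {bigOr (List.ofFn χ)})
      (Formula.blame (⋃ i, E i) (⋃ i, F i) (bigOr (List.ofFn χ))) := by
  exact superJR n E F χ hF

end DutyToWarn
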